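/- Let H be a real Hilbert space, let 0<ν<1, let t>0, and let φ:(0,t)→H be square-integrable. Then ‖(𝓘φ)(t)‖² ≤ ω_{2−ν}(t) · (𝓘^{1−ν} g)(t), where g(s)=‖(𝓘^ν φ)(s)‖². -/

import Mathlib

open MeasureTheory intervalIntegral

/-- The Riemann–Liouville kernel `ω_α(t) = t^(α-1)/Γ(α)`. -/
noncomputable def rlKernel (α t : ℝ) : ℝ := t ^ (α - 1) / Real.Gamma α

/-- The Riemann–Liouville fractional integral `(𝓘^α φ)(t) = ∫₀ᵗ ω_α(t-s) φ(s) ds`. -/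
noncomputable def fracInt {H : Type*} [NormedAddCommGroup H] [NormedSpace ℝ H]
    (α : ℝ) (φ : ℝ → H) (t : ℝ) : H :=
  ∫ s in (0:ℝ)..t, rlKernel α (t - s) • φ s

section helpers

lemma rlKernel_nonneg {α x : ℝ} (hα : 0 < α) (hx : 0 ≤ x) : 0 ≤ rlKernel α x :=
  div_nonneg (Real.rpow_nonneg hx _) (Real.Gamma_pos_of_pos hα).le

lemma rlKernel_measurable (α : ℝ) : Measurable (rlKernel α) := by
  unfold rlKernel; measurability

lemma II.congr_uIcc {E : Type*} [NormedAddCommGroup E] {f g : ℝ → E} {a b : ℝ}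
    (h : IntervalIntegrable f volume a b) (he : ∀ x ∈ Set.uIcc a b, f x = g x) :
    IntervalIntegrable g volume a b := by
  constructor
  · exact h.1.congr (ae_restrict_of_forall_mem measurableSet_Ioc
      fun x hx => he x (Set.Icc_subset_uIcc (Set.Ioc_subset_Icc_self hx)))
  · exact h.2.congr (ae_restrict_of_forall_mem measurableSet_Ioc
      fun x hx => he x (Set.Icc_subset_uIcc' (Set.Ioc_subset_Icc_self hx)))

variable {ν : ℝ}

lemma betaReal (hν : 0 < ν) (hν1 : ν < 1) :
    IntervalIntegrable (fun x : ℝ => x ^ (ν - 1) * (1 - x) ^ (-ν)) volume 0 1 ∧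
      ∫ x in (0:ℝ)..1, x ^ (ν - 1) * (1 - x) ^ (-ν) = Real.Gamma ν * Real.Gamma (1 - ν) := by
  have hu : 0 < (Complex.ofReal ν).re := by simpa using hν
  have hv : 0 < ((1 : ℂ) - Complex.ofReal ν).re := by
    simp only [Complex.sub_re, Complex.one_re, Complex.ofReal_re]; linarith
  have heq : ∀ x ∈ Set.uIcc (0:ℝ) 1,
      (Complex.ofReal x) ^ ((ν:ℂ) - 1) * (1 - Complex.ofReal x) ^ (((1:ℂ) - ν) - 1) =
        Complex.ofReal (x ^ (ν - 1) * (1 - x) ^ (-ν)) := by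
    intro x hx
    rw [Set.uIcc_of_le zero_le_one] at hx
    obtain ⟨h0, h1⟩ := hx
    rw [Complex.ofReal_mul, Complex.ofReal_cpow h0,
      Complex.ofReal_cpow (by linarith : (0:ℝ) ≤ 1 - x)]
    push_cast
    ring_nf
  have hconv := Complex.betaIntegral_convergent hu hv
  have heq' : ∀ᵐ x ∂(volume.restrict (Set.Ioc (0:ℝ) 1)),
      ((Complex.ofReal x) ^ ((ν:ℂ) - 1) * (1 - Complex.ofReal x) ^ (((1:ℂ) - ν) - 1)).re
        = x ^ (ν - 1) * (1 - x) ^ (-ν) := by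
    refine ae_restrict_of_forall_mem measurableSet_Ioc fun x hx => ?_
    rw [heq x (by rw [Set.uIcc_of_le zero_le_one]; exact Set.Ioc_subset_Icc_self hx)]
    simp
  have hint : IntervalIntegrable (fun x : ℝ => x ^ (ν - 1) * (1 - x) ^ (-ν)) volume 0 1 := by
    constructor
    · exact (hconv.1.re).congr heq'
    · simp [Set.Ioc_eq_empty (by norm_num : ¬ (1:ℝ) < 0), MeasureTheory.integrableOn_empty]
  refine ⟨hint, ?_⟩
  have hβ := Complex.Gamma_mul_Gamma_eq_betaIntegral hu hv
  have h1 : (ν:ℂ) + ((1:ℂ) - ν) = 1 := by ring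
  rw [h1, Complex.Gamma_one, one_mul, Complex.betaIntegral] at hβ
  rw [intervalIntegral.integral_congr heq, intervalIntegral.integral_ofReal] at hβ
  have : Complex.ofReal (Real.Gamma ν * Real.Gamma (1 - ν))
      = Complex.ofReal (∫ x in (0:ℝ)..1, x ^ (ν - 1) * (1 - x) ^ (-ν)) := by
    rw [← hβ, Complex.ofReal_mul, Complex.Gamma_ofReal, ← Complex.Gamma_ofReal (1 - ν)]
    push_cast
    ring_nf
  exact (Complex.ofReal_inj.mp this).symm

lemma beta_cov {a b : ℝ} (hab : a < b) :
    ∀ s ∈ Set.uIcc a b,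
      (b - a)⁻¹ • ((((b - a)⁻¹ * s + (-a * (b - a)⁻¹)) ^ (ν - 1) *
          (1 - ((b - a)⁻¹ * s + (-a * (b - a)⁻¹))) ^ (-ν)) : ℝ)
        = (s - a) ^ (ν - 1) * (b - s) ^ (-ν) := by
  intro s hs
  rw [Set.uIcc_of_le hab.le] at hs
  obtain ⟨h1, h2⟩ := hs
  have hba : (0:ℝ) < b - a := by linarith
  have hx : (b - a)⁻¹ * s + (-a * (b - a)⁻¹) = (s - a) / (b - a) := by ring
  have h1x : 1 - (s - a) / (b - a) = (b - s) / (b - a) := by field_simp; ring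
  rw [hx, h1x, Real.div_rpow (by linarith) hba.le, Real.div_rpow (by linarith) hba.le]
  rw [div_mul_div_comm, ← Real.rpow_add hba]
  have : (b - a) ^ (ν - 1 + -ν) = (b - a)⁻¹ := by
    rw [show ν - 1 + -ν = -1 by ring, Real.rpow_neg_one]
  rw [this, smul_eq_mul]
  field_simp

lemma betaAB (hν : 0 < ν) (hν1 : ν < 1) {a b : ℝ} (hab : a < b) :
    IntervalIntegrable (fun s => (s - a) ^ (ν - 1) * (b - s) ^ (-ν)) volume a b ∧
      ∫ s in a..b, (s - a) ^ (ν - 1) * (b - s) ^ (-ν) = Real.Gamma ν * Real.Gamma (1 - ν) := by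
  obtain ⟨hi, hval⟩ := betaReal hν hν1
  have hba : (0:ℝ) < b - a := by linarith
  set c : ℝ := (b - a)⁻¹ with hc
  set d : ℝ := -a * (b - a)⁻¹ with hd
  have hc0 : c ≠ 0 := inv_ne_zero hba.ne'
  have hea : c * a + d = 0 := by simp only [hc, hd]; field_simp; ring
  have heb : c * b + d = 1 := by simp only [hc, hd]; field_simp; ring
  have h1 : IntervalIntegrable (fun x : ℝ => (x + d) ^ (ν - 1) * (1 - (x + d)) ^ (-ν))
      volume (0 - d) (1 - d) := hi.comp_add_right d
  have h2 : IntervalIntegrable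
      (fun s : ℝ => (c * s + d) ^ (ν - 1) * (1 - (c * s + d)) ^ (-ν))
      volume ((0 - d) / c) ((1 - d) / c) := h1.comp_mul_left (c := c)
  have hpa : (0 - d) / c = a := by simp only [hc, hd]; field_simp; ring
  have hpb : (1 - d) / c = b := by simp only [hc, hd]; field_simp; ring
  rw [hpa, hpb] at h2
  have key : ∀ s ∈ Set.uIcc a b,
      c • ((c * s + d) ^ (ν - 1) * (1 - (c * s + d)) ^ (-ν))
        = (s - a) ^ (ν - 1) * (b - s) ^ (-ν) := beta_cov hab
  constructor
  · exact II.congr_uIcc (h2.smul c) key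
  · rw [← intervalIntegral.integral_congr key]
    rw [intervalIntegral.integral_smul]
    rw [intervalIntegral.integral_comp_mul_add
      (fun x : ℝ => x ^ (ν - 1) * (1 - x) ^ (-ν)) hc0 d, hea, heb, hval]
    rw [smul_smul]
    rw [show c * c⁻¹ = 1 from mul_inv_cancel₀ hc0, one_smul]

lemma betaKernel (hν : 0 < ν) (hν1 : ν < 1) {a b : ℝ} (hab : a < b) :
    IntegrableOn (fun s => rlKernel (1 - ν) (b - s) * rlKernel ν (s - a)) (Set.Ioo a b) volume ∧
      ∫ s in Set.Ioo a b, rlKernel (1 - ν) (b - s) * rlKernel ν (s - a) = 1 := by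
  obtain ⟨hi, hval⟩ := betaAB hν hν1 hab
  have hΓν : (0:ℝ) < Real.Gamma ν := Real.Gamma_pos_of_pos hν
  have hΓν' : (0:ℝ) < Real.Gamma (1 - ν) := Real.Gamma_pos_of_pos (by linarith)
  have heq : ∀ s : ℝ, rlKernel (1 - ν) (b - s) * rlKernel ν (s - a)
      = (Real.Gamma ν * Real.Gamma (1 - ν))⁻¹ * ((s - a) ^ (ν - 1) * (b - s) ^ (-ν)) := by
    intro s
    simp only [rlKernel]
    rw [show (1 - ν) - 1 = -ν by ring]
    field_simp
  constructor
  · refine (IntegrableOn.congr_fun ?_ (fun s _ => (heq s).symm) measurableSet_Ioo)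
    exact ((hi.1.mono_set Set.Ioo_subset_Ioc_self).const_mul _)
  · rw [MeasureTheory.setIntegral_congr_fun measurableSet_Ioo (fun s _ => heq s)]
    rw [MeasureTheory.integral_const_mul]
    rw [← MeasureTheory.integral_Ioc_eq_integral_Ioo,
      ← intervalIntegral.integral_of_le hab.le, hval]
    field_simp

lemma betaKernel_lintegral (hν : 0 < ν) (hν1 : ν < 1) {a b : ℝ} (hab : a < b) :
    ∫⁻ s in Set.Ioo a b, ENNReal.ofReal (rlKernel (1 - ν) (b - s) * rlKernel ν (s - a)) = 1 := by
  rw [← MeasureTheory.ofReal_integral_eq_lintegral_ofReal (betaKernel hν hν1 hab).1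
    (ae_restrict_of_forall_mem measurableSet_Ioo fun s hs =>
      mul_nonneg (rlKernel_nonneg (by linarith) (by linarith [hs.2]))
        (rlKernel_nonneg hν (by linarith [hs.1])))]
  rw [(betaKernel hν hν1 hab).2, ENNReal.ofReal_one]

lemma kernelInt {α : ℝ} (hα : 0 < α) {c : ℝ} (hc : 0 < c) :
    IntegrableOn (fun s => rlKernel α (c - s)) (Set.Ioo 0 c) volume ∧
      ∫ s in Set.Ioo 0 c, rlKernel α (c - s) = rlKernel (α + 1) c := by
  have hΓ : (0:ℝ) < Real.Gamma α := Real.Gamma_pos_of_pos hα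
  have hii : IntervalIntegrable (fun s : ℝ => rlKernel α (c - s)) volume 0 c := by
    have h0 : IntervalIntegrable (fun x : ℝ => x ^ (α - 1)) volume 0 c :=
      intervalIntegral.intervalIntegrable_rpow' (by linarith)
    have h1 : IntervalIntegrable (fun s : ℝ => (c - s) ^ (α - 1)) volume (c - 0) (c - c) :=
      h0.comp_sub_left c
    simp only [sub_zero, sub_self] at h1
    simpa [rlKernel, div_eq_mul_inv] using (h1.symm.mul_const (Real.Gamma α)⁻¹)
  have hval : ∫ s in (0:ℝ)..c, rlKernel α (c - s) = rlKernel (α + 1) c := by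
    simp only [rlKernel, div_eq_mul_inv]
    rw [intervalIntegral.integral_mul_const, intervalIntegral.integral_comp_sub_left
      (fun x : ℝ => x ^ (α - 1)) c, sub_self, sub_zero,
      integral_rpow (Or.inl (by linarith : (-1:ℝ) < α - 1))]
    rw [Real.Gamma_add_one hα.ne', show α - 1 + 1 = α by ring]
    rw [Real.zero_rpow (by intro h; exact hα.ne' (by linarith)), show α + 1 - 1 = α by ring]
    rw [mul_inv]
    ring
  exact ⟨(hii.1.mono_set Set.Ioo_subset_Ioc_self),
    by rw [← MeasureTheory.integral_Ioc_eq_integral_Ioo, ← intervalIntegral.integral_of_le hc.le,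
      hval]⟩

lemma kernelInt_lintegral {α : ℝ} (hα : 0 < α) {c : ℝ} (hc : 0 < c) :
    ∫⁻ s in Set.Ioo 0 c, ENNReal.ofReal (rlKernel α (c - s)) =
      ENNReal.ofReal (rlKernel (α + 1) c) := by
  rw [← MeasureTheory.ofReal_integral_eq_lintegral_ofReal (kernelInt hα hc).1
    (ae_restrict_of_forall_mem measurableSet_Ioo fun s hs =>
      rlKernel_nonneg hα (by linarith [hs.2]))]
  rw [(kernelInt hα hc).2]

open ENNReal in
lemma lintegral_CS {X : Type*} [MeasurableSpace X] {μ : Measure X} {k f : X → ℝ≥0∞}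
    (hk : AEMeasurable k μ) (hf : AEMeasurable f μ) :
    (∫⁻ x, k x * f x ∂μ) ^ 2 ≤ (∫⁻ x, k x ∂μ) * ∫⁻ x, k x * f x ^ 2 ∂μ := by
  have h22 : Real.HolderConjugate 2 2 := Real.HolderConjugate.two_two
  have hg : AEMeasurable (fun x => k x ^ (1/2 : ℝ)) μ := hk.pow_const _
  have hh : AEMeasurable (fun x => k x ^ (1/2 : ℝ) * f x) μ := hg.mul hf
  have key := ENNReal.lintegral_mul_le_Lp_mul_Lq μ h22 hg hh
  have e0 : ∀ x : ℝ≥0∞, x ^ (1/2:ℝ) * x ^ (1/2:ℝ) = x := by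
    intro x
    rw [← ENNReal.rpow_add_of_nonneg _ _ (by norm_num) (by norm_num)]
    norm_num
  have e2 : ∀ x : ℝ≥0∞, (x ^ (1/2:ℝ)) ^ (2:ℝ) = x := by
    intro x; rw [← ENNReal.rpow_mul]; norm_num
  have e4 : ∀ A : ℝ≥0∞, (A ^ (1/2:ℝ)) ^ (2:ℕ) = A := by
    intro A
    rw [← ENNReal.rpow_natCast (A ^ (1/2:ℝ)) 2, ← ENNReal.rpow_mul]
    norm_num
  simp only [Pi.mul_apply, ← mul_assoc, e0] at key
  have key2 := pow_le_pow_left₀ (zero_le ..) key 2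
  calc (∫⁻ x, k x * f x ∂μ) ^ 2
      ≤ ((∫⁻ a, (k a ^ (1/2:ℝ)) ^ (2:ℝ) ∂μ) ^ (1/2:ℝ) *
          (∫⁻ a, (k a ^ (1/2:ℝ) * f a) ^ (2:ℝ) ∂μ) ^ (1/2:ℝ)) ^ 2 := key2
    _ = (∫⁻ x, k x ∂μ) * ∫⁻ x, k x * f x ^ 2 ∂μ := by
        rw [mul_pow, e4, e4]
        congr 1
        · exact lintegral_congr fun x => e2 (k x)
        · refine lintegral_congr fun x => ?_
          rw [ENNReal.mul_rpow_of_nonneg _ _ (by norm_num), e2 (k x)]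
          congr 1
          rw [← ENNReal.rpow_natCast (f x) 2]
          norm_num

end helpers

open ENNReal in
theorem stmt3 {H : Type*} [NormedAddCommGroup H] [InnerProductSpace ℝ H] [CompleteSpace H]
    (ν t : ℝ) (hν : 0 < ν) (hν1 : ν < 1) (ht : 0 < t)
    (φ : ℝ → H) (hφ : MemLp φ 2 (volume.restrict (Set.Ioo 0 t))) :
    ‖fracInt 1 φ t‖ ^ 2 ≤
      rlKernel (2 - ν) t * fracInt (1 - ν) (fun s => ‖fracInt ν φ s‖ ^ 2) t := by
  have hν' : 0 < 1 - ν := by linarith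
  set I : Set ℝ := Set.Ioo 0 t with hI
  haveI hfin : IsFiniteMeasure (volume.restrict I) :=
    ⟨by rw [Measure.restrict_apply_univ]; simp [hI, Real.volume_Ioo]⟩
  obtain ⟨φ', hφ'sm, hφae⟩ := hφ.1
  have hφ2 : MemLp φ' 2 (volume.restrict I) := hφ.ae_eq hφae
  have hφ1 : Integrable φ' (volume.restrict I) := hφ2.integrable (by norm_num)
  have hφsq : (∫⁻ r in I, (‖φ' r‖₊ : ℝ≥0∞) ^ 2 ∂volume) < ⊤ := by
    have h := lintegral_rpow_enorm_lt_top_of_eLpNorm_lt_top (f := φ')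
      (by norm_num : (2:ℝ≥0∞) ≠ 0) (by norm_num) hφ2.2
    refine lt_of_eq_of_lt ?_ h
    refine lintegral_congr fun r => ?_
    rw [ENNReal.toReal_ofNat, ← ENNReal.rpow_natCast]
    norm_num
    rfl
  set K : ℝ → ℝ := fun s => rlKernel (1 - ν) (t - s) with hK
  set ψ : ℝ → H := fun s => ∫ r in Set.Ioo 0 s, rlKernel ν (s - r) • φ' r with hψ
  have hKmeas : Measurable K := (rlKernel_measurable _).comp (measurable_const.sub measurable_id)
  have hKnonneg : ∀ s ∈ I, 0 ≤ K s := fun s hs => rlKernel_nonneg hν' (by linarith [hs.2])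
  set T : Set (ℝ × ℝ) := {q : ℝ × ℝ | q.2 < q.1} with hT
  have hTm : MeasurableSet T := measurableSet_lt measurable_snd measurable_fst
  -- set intersections
  have hIio : ∀ s ∈ I, Set.Iio s ∩ I = Set.Ioo 0 s := by
    intro s hs; ext x
    simp only [Set.mem_inter_iff, Set.mem_Iio, hI, Set.mem_Ioo]
    constructor
    · rintro ⟨h1, h2, h3⟩; exact ⟨h2, h1⟩
    · rintro ⟨h1, h2⟩; exact ⟨h2, h1, by linarith [hs.2]⟩
  have hIoi : ∀ r ∈ I, Set.Ioi r ∩ I = Set.Ioo r t := by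
    intro r hr; ext x
    simp only [Set.mem_inter_iff, Set.mem_Ioi, hI, Set.mem_Ioo]
    constructor
    · rintro ⟨h1, h2, h3⟩; exact ⟨h1, h3⟩
    · rintro ⟨h1, h2⟩; exact ⟨h1, by linarith [hr.1], h2⟩
  ---- Fubini for the semigroup identity
  set u : ℝ × ℝ → H := T.indicator (fun q => (K q.1 * rlKernel ν (q.1 - q.2)) • φ' q.2) with hu
  have hu_sm : StronglyMeasurable u := by
    refine StronglyMeasurable.indicator ?_ hTm
    refine StronglyMeasurable.smul ?_ (hφ'sm.comp_measurable measurable_snd)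
    exact ((hKmeas.comp measurable_fst).mul
      ((rlKernel_measurable ν).comp (measurable_fst.sub measurable_snd))).stronglyMeasurable
  set w : ℝ × ℝ → ℝ≥0∞ :=
    fun q => T.indicator (fun q => ENNReal.ofReal (K q.1 * rlKernel ν (q.1 - q.2))) q *
      (‖φ' q.2‖₊ : ℝ≥0∞) with hw
  have hw_meas : Measurable w := by
    refine Measurable.mul ?_ (hφ'sm.enorm.comp measurable_snd)
    refine Measurable.indicator ?_ hTm
    exact ENNReal.measurable_ofReal.comp (((hKmeas.comp measurable_fst).mul
      ((rlKernel_measurable ν).comp (measurable_fst.sub measurable_snd))))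
  have hw_pt : ∀ s ∈ I, ∀ r : ℝ, (‖u (s, r)‖₊ : ℝ≥0∞) = w (s, r) := by
    intro s hs r
    by_cases h : r < s
    · simp only [hu, hw, Set.indicator_apply, hT, Set.mem_setOf_eq, if_pos h]
      rw [nnnorm_smul, ENNReal.coe_mul,
        ← Real.enorm_eq_ofReal (mul_nonneg (hKnonneg s hs) (rlKernel_nonneg hν (by linarith)))]
      rfl
    · simp only [hu, hw, Set.indicator_apply, hT, Set.mem_setOf_eq, if_neg h]
      simp
  have hprodr : (volume.restrict I).prod (volume.restrict I)
      = (volume.prod volume).restrict (I ×ˢ I) := Measure.prod_restrict I I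
  have haefst : ∀ᵐ q ∂((volume.restrict I).prod (volume.restrict I)), q.1 ∈ I := by
    rw [hprodr]
    exact ae_restrict_of_forall_mem (measurableSet_Ioo.prod measurableSet_Ioo) fun q hq => hq.1
  -- inner lintegral in r-outer form
  have hw_r : ∀ r ∈ I, (∫⁻ s in I, w (s, r) ∂volume) = (‖φ' r‖₊ : ℝ≥0∞) := by
    intro r hr
    have h1 : ∀ s : ℝ, w (s, r)
        = (Set.Ioi r).indicator (fun s' => ENNReal.ofReal (K s' * rlKernel ν (s' - r))) s *
            (‖φ' r‖₊ : ℝ≥0∞) := by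
      intro s
      by_cases h : r < s
      · simp only [hw, Set.indicator_apply, hT, Set.mem_setOf_eq, Set.mem_Ioi, if_pos h]
      · simp only [hw, Set.indicator_apply, hT, Set.mem_setOf_eq, Set.mem_Ioi, if_neg h,
          zero_mul]
    simp_rw [h1]
    rw [lintegral_mul_const' _ _ ENNReal.coe_ne_top,
      lintegral_indicator measurableSet_Ioi,
      Measure.restrict_restrict measurableSet_Ioi, hIoi r hr,
      betaKernel_lintegral hν hν1 hr.2, one_mul]
  have hu_int : Integrable u ((volume.restrict I).prod (volume.restrict I)) := by
    refine ⟨hu_sm.aestronglyMeasurable, ?_⟩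
    show (∫⁻ q, (‖u q‖₊ : ℝ≥0∞) ∂((volume.restrict I).prod (volume.restrict I))) < ⊤
    have hcongr : ∀ᵐ q ∂((volume.restrict I).prod (volume.restrict I)),
        (‖u q‖₊ : ℝ≥0∞) = w q := haefst.mono fun q hq => hw_pt q.1 hq q.2
    rw [lintegral_congr_ae hcongr, lintegral_prod_symm w hw_meas.aemeasurable]
    rw [lintegral_congr_ae (ae_restrict_of_forall_mem measurableSet_Ioo hw_r)]
    exact hφ1.2
  have hswap := MeasureTheory.integral_integral_swap
    (μ := volume.restrict I) (ν := volume.restrict I) (f := fun s r => u (s, r)) hu_int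
  have hL : ∀ s ∈ I, (∫ r in I, u (s, r) ∂volume) = K s • ψ s := by
    intro s hs
    have h1 : ∀ r : ℝ, u (s, r)
        = (Set.Iio s).indicator (fun r' => (K s * rlKernel ν (s - r')) • φ' r') r := by
      intro r
      by_cases h : r < s
      · simp only [hu, Set.indicator_apply, hT, Set.mem_setOf_eq, Set.mem_Iio, if_pos h]
      · simp only [hu, Set.indicator_apply, hT, Set.mem_setOf_eq, Set.mem_Iio, if_neg h]
    simp_rw [h1]
    rw [MeasureTheory.integral_indicator measurableSet_Iio,
      Measure.restrict_restrict measurableSet_Iio, hIio s hs]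
    simp_rw [mul_smul]
    rw [MeasureTheory.integral_smul]
  have hR : ∀ r ∈ I, (∫ s in I, u (s, r) ∂volume) = φ' r := by
    intro r hr
    have h1 : ∀ s : ℝ, u (s, r)
        = (Set.Ioi r).indicator (fun s' => (K s' * rlKernel ν (s' - r)) • φ' r) s := by
      intro s
      by_cases h : r < s
      · simp only [hu, Set.indicator_apply, hT, Set.mem_setOf_eq, Set.mem_Ioi, if_pos h]
      · simp only [hu, Set.indicator_apply, hT, Set.mem_setOf_eq, Set.mem_Ioi, if_neg h]
    simp_rw [h1]
    rw [MeasureTheory.integral_indicator measurableSet_Ioi,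
      Measure.restrict_restrict measurableSet_Ioi, hIoi r hr,
      _root_.integral_smul_const, (betaKernel hν hν1 hr.2).2, one_smul]
  have hsemigroup : (∫ r in I, φ' r ∂volume) = ∫ s in I, K s • ψ s ∂volume := by
    calc (∫ r in I, φ' r ∂volume) = ∫ r in I, ∫ s in I, u (s, r) ∂volume ∂volume :=
          (setIntegral_congr_fun measurableSet_Ioo hR).symm
      _ = ∫ s in I, ∫ r in I, u (s, r) ∂volume ∂volume := hswap.symm
      _ = ∫ s in I, K s • ψ s ∂volume := setIntegral_congr_fun measurableSet_Ioo hL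
  -- integrability of K • ψ on I
  have hKψ_int : Integrable (fun s => K s • ψ s) (volume.restrict I) := by
    have h := hu_int.integral_prod_left
    exact h.congr (ae_restrict_of_forall_mem measurableSet_Ioo hL)
  -- measurability of ψ
  set v : ℝ × ℝ → H := T.indicator (fun q => rlKernel ν (q.1 - q.2) • φ' q.2) with hv
  have hv_sm : StronglyMeasurable v := by
    refine StronglyMeasurable.indicator ?_ hTm
    refine StronglyMeasurable.smul ?_ (hφ'sm.comp_measurable measurable_snd)
    exact ((rlKernel_measurable ν).comp (measurable_fst.sub measurable_snd)).stronglyMeasurable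
  have hF_sm : StronglyMeasurable (fun s => ∫ r, v (s, r) ∂(volume.restrict I)) :=
    hv_sm.integral_prod_right'
  have hψ_eqF : ∀ s ∈ I, (∫ r in I, v (s, r) ∂volume) = ψ s := by
    intro s hs
    have h1 : ∀ r : ℝ, v (s, r)
        = (Set.Iio s).indicator (fun r' => rlKernel ν (s - r') • φ' r') r := by
      intro r
      by_cases h : r < s
      · simp only [hv, Set.indicator_apply, hT, Set.mem_setOf_eq, Set.mem_Iio, if_pos h]
      · simp only [hv, Set.indicator_apply, hT, Set.mem_setOf_eq, Set.mem_Iio, if_neg h]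
    simp_rw [h1]
    rw [MeasureTheory.integral_indicator measurableSet_Iio,
      Measure.restrict_restrict measurableSet_Iio, hIio s hs]
  have hψ_aesm : AEStronglyMeasurable ψ (volume.restrict I) :=
    ⟨_, hF_sm, ae_restrict_of_forall_mem measurableSet_Ioo fun s hs => (hψ_eqF s hs).symm⟩
  -- pointwise Cauchy-Schwarz bound on ψ
  have hpt : ∀ s ∈ I, ((‖ψ s‖₊ : ℝ≥0∞)) ^ 2 ≤ ENNReal.ofReal (rlKernel (ν + 1) t) *
      ∫⁻ r in Set.Ioo 0 s, ENNReal.ofReal (rlKernel ν (s - r)) * (‖φ' r‖₊ : ℝ≥0∞) ^ 2 ∂volume := by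
    intro s hs
    have h1 : (‖ψ s‖₊ : ℝ≥0∞)
        ≤ ∫⁻ r in Set.Ioo 0 s, ENNReal.ofReal (rlKernel ν (s - r)) * (‖φ' r‖₊ : ℝ≥0∞) ∂volume := by
      refine le_trans (enorm_integral_le_lintegral_enorm _) ?_
      refine le_of_eq (lintegral_congr_ae (ae_restrict_of_forall_mem measurableSet_Ioo
        fun r hr => ?_))
      simp only [enorm_smul, nnnorm_smul, ENNReal.coe_mul]
      rw [Real.enorm_eq_ofReal (rlKernel_nonneg hν (by linarith [hr.2]))]
      rfl
    have hkm : AEMeasurable (fun r => ENNReal.ofReal (rlKernel ν (s - r)))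
        (volume.restrict (Set.Ioo 0 s)) :=
      (ENNReal.measurable_ofReal.comp
        ((rlKernel_measurable ν).comp (measurable_const.sub measurable_id))).aemeasurable
    have h2 := lintegral_CS (μ := volume.restrict (Set.Ioo 0 s)) hkm
      hφ'sm.enorm.aemeasurable
    have h3 : (∫⁻ r in Set.Ioo 0 s, ENNReal.ofReal (rlKernel ν (s - r)) ∂volume)
        = ENNReal.ofReal (rlKernel (ν + 1) s) := kernelInt_lintegral hν hs.1
    have h4 : rlKernel (ν + 1) s ≤ rlKernel (ν + 1) t := by
      unfold rlKernel
      have hx : s ^ (ν + 1 - 1) ≤ t ^ (ν + 1 - 1) := by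
        rw [show ν + 1 - 1 = ν by ring]
        exact Real.rpow_le_rpow hs.1.le hs.2.le hν.le
      simp only [div_eq_mul_inv]
      exact mul_le_mul_of_nonneg_right hx
        (inv_nonneg.2 (Real.Gamma_pos_of_pos (by linarith : (0:ℝ) < ν + 1)).le)
    calc (‖ψ s‖₊ : ℝ≥0∞) ^ 2
        ≤ (∫⁻ r in Set.Ioo 0 s,
            ENNReal.ofReal (rlKernel ν (s - r)) * (‖φ' r‖₊ : ℝ≥0∞) ∂volume) ^ 2 :=
          pow_le_pow_left₀ (zero_le ..) h1 2
      _ ≤ (∫⁻ r in Set.Ioo 0 s, ENNReal.ofReal (rlKernel ν (s - r)) ∂volume) *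
            ∫⁻ r in Set.Ioo 0 s,
              ENNReal.ofReal (rlKernel ν (s - r)) * (‖φ' r‖₊ : ℝ≥0∞) ^ 2 ∂volume := h2
      _ ≤ ENNReal.ofReal (rlKernel (ν + 1) t) * _ := by
          refine mul_le_mul_left ?_ _
          rw [h3]
          exact ENNReal.ofReal_le_ofReal h4
  -- squared Tonelli
  set w2 : ℝ × ℝ → ℝ≥0∞ :=
    fun q => T.indicator (fun q => ENNReal.ofReal (K q.1 * rlKernel ν (q.1 - q.2))) q *
      (‖φ' q.2‖₊ : ℝ≥0∞) ^ 2 with hw2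
  have hw2_meas : Measurable w2 := by
    refine Measurable.mul ?_ ((hφ'sm.enorm.comp measurable_snd).pow_const 2)
    refine Measurable.indicator ?_ hTm
    exact ENNReal.measurable_ofReal.comp (((hKmeas.comp measurable_fst).mul
      ((rlKernel_measurable ν).comp (measurable_fst.sub measurable_snd))))
  have hw2_s : ∀ s ∈ I, (∫⁻ r in I, w2 (s, r) ∂volume)
      = ENNReal.ofReal (K s) *
        ∫⁻ r in Set.Ioo 0 s, ENNReal.ofReal (rlKernel ν (s - r)) * (‖φ' r‖₊ : ℝ≥0∞) ^ 2 ∂volume := by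
    intro s hs
    have h1 : ∀ r : ℝ, w2 (s, r)
        = (Set.Iio s).indicator
            (fun r' => ENNReal.ofReal (K s * rlKernel ν (s - r')) * (‖φ' r'‖₊ : ℝ≥0∞) ^ 2) r := by
      intro r
      by_cases h : r < s
      · simp only [hw2, Set.indicator_apply, hT, Set.mem_setOf_eq, Set.mem_Iio, if_pos h]
      · simp only [hw2, Set.indicator_apply, hT, Set.mem_setOf_eq, Set.mem_Iio, if_neg h, zero_mul]
    simp_rw [h1]
    rw [lintegral_indicator measurableSet_Iio,
      Measure.restrict_restrict measurableSet_Iio, hIio s hs]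
    simp_rw [ENNReal.ofReal_mul (hKnonneg s hs), mul_assoc]
    rw [lintegral_const_mul' _ _ ENNReal.ofReal_ne_top]
  have hw2_r : ∀ r ∈ I, (∫⁻ s in I, w2 (s, r) ∂volume) = (‖φ' r‖₊ : ℝ≥0∞) ^ 2 := by
    intro r hr
    have h1 : ∀ s : ℝ, w2 (s, r)
        = (Set.Ioi r).indicator (fun s' => ENNReal.ofReal (K s' * rlKernel ν (s' - r))) s *
            (‖φ' r‖₊ : ℝ≥0∞) ^ 2 := by
      intro s
      by_cases h : r < s
      · simp only [hw2, Set.indicator_apply, hT, Set.mem_setOf_eq, Set.mem_Ioi, if_pos h]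
      · simp only [hw2, Set.indicator_apply, hT, Set.mem_setOf_eq, Set.mem_Ioi, if_neg h, zero_mul]
    simp_rw [h1]
    rw [lintegral_mul_const' _ _ (ENNReal.pow_ne_top ENNReal.coe_ne_top),
      lintegral_indicator measurableSet_Ioi,
      Measure.restrict_restrict measurableSet_Ioi, hIoi r hr,
      betaKernel_lintegral hν hν1 hr.2, one_mul]
  set S : ℝ≥0∞ := ∫⁻ r in I, (‖φ' r‖₊ : ℝ≥0∞) ^ 2 ∂volume with hS
  set B : ℝ≥0∞ := ∫⁻ s in I, ENNReal.ofReal (K s) * (‖ψ s‖₊ : ℝ≥0∞) ^ 2 ∂volume with hB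
  have hBle : B ≤ ENNReal.ofReal (rlKernel (ν + 1) t) * S := by
    have hB1 : B ≤ ∫⁻ s in I, ENNReal.ofReal (rlKernel (ν + 1) t) *
        ∫⁻ r in I, w2 (s, r) ∂volume ∂volume := by
      refine lintegral_mono_ae (ae_restrict_of_forall_mem measurableSet_Ioo fun s hs => ?_)
      rw [hw2_s s hs]
      calc ENNReal.ofReal (K s) * (‖ψ s‖₊ : ℝ≥0∞) ^ 2
          ≤ ENNReal.ofReal (K s) * (ENNReal.ofReal (rlKernel (ν + 1) t) *
              ∫⁻ r in Set.Ioo 0 s,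
                ENNReal.ofReal (rlKernel ν (s - r)) * (‖φ' r‖₊ : ℝ≥0∞) ^ 2 ∂volume) :=
            mul_le_mul_right (hpt s hs) _
        _ = ENNReal.ofReal (rlKernel (ν + 1) t) * (ENNReal.ofReal (K s) *
              ∫⁻ r in Set.Ioo 0 s,
                ENNReal.ofReal (rlKernel ν (s - r)) * (‖φ' r‖₊ : ℝ≥0∞) ^ 2 ∂volume) := by
            ring
    rw [lintegral_const_mul' _ _ ENNReal.ofReal_ne_top] at hB1
    have hswap2 : (∫⁻ s in I, ∫⁻ r in I, w2 (s, r) ∂volume ∂volume)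
        = ∫⁻ r in I, ∫⁻ s in I, w2 (s, r) ∂volume ∂volume :=
      lintegral_lintegral_swap hw2_meas.aemeasurable
    rw [hswap2, lintegral_congr_ae (ae_restrict_of_forall_mem measurableSet_Ioo hw2_r)] at hB1
    exact hB1
  have hBne : B ≠ ⊤ :=
    (lt_of_le_of_lt hBle (ENNReal.mul_lt_top ENNReal.ofReal_lt_top hφsq)).ne
  -- identify integral of RHS with B.toReal
  have hRHSpt : ∀ s ∈ I, ENNReal.ofReal (K s * ‖ψ s‖ ^ 2)
      = ENNReal.ofReal (K s) * (‖ψ s‖₊ : ℝ≥0∞) ^ 2 := by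
    intro s hs
    rw [ENNReal.ofReal_mul (hKnonneg s hs), ENNReal.ofReal_pow (norm_nonneg _),
      ofReal_norm]
    rfl
  have hRHS_aesm : AEStronglyMeasurable (fun s => K s * ‖ψ s‖ ^ 2) (volume.restrict I) := by
    have h2 : AEStronglyMeasurable (fun s => ‖ψ s‖ ^ 2) (volume.restrict I) := by
      simp only [pow_two]; exact hψ_aesm.norm.mul hψ_aesm.norm
    exact hKmeas.aestronglyMeasurable.mul h2
  have hRHS_val : (∫ s in I, K s * ‖ψ s‖ ^ 2 ∂volume) = B.toReal := by
    rw [MeasureTheory.integral_eq_lintegral_of_nonneg_ae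
      (ae_restrict_of_forall_mem measurableSet_Ioo fun s hs =>
        mul_nonneg (hKnonneg s hs) (sq_nonneg _)) hRHS_aesm]
    congr 1
    exact lintegral_congr_ae (ae_restrict_of_forall_mem measurableSet_Ioo hRHSpt)
  -- norm bound and Cauchy-Schwarz on I
  have hnorm_le : (‖∫ s in I, K s • ψ s ∂volume‖₊ : ℝ≥0∞)
      ≤ ∫⁻ s in I, ENNReal.ofReal (K s) * (‖ψ s‖₊ : ℝ≥0∞) ∂volume := by
    refine le_trans (enorm_integral_le_lintegral_enorm _) ?_
    refine le_of_eq (lintegral_congr_ae (ae_restrict_of_forall_mem measurableSet_Ioo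
      fun s hs => ?_))
    simp only [enorm_smul, nnnorm_smul, ENNReal.coe_mul]
    rw [Real.enorm_eq_ofReal (hKnonneg s hs)]
    rfl
  have hCS := lintegral_CS (μ := volume.restrict I)
    (ENNReal.measurable_ofReal.comp hKmeas).aemeasurable hψ_aesm.enorm
  have hkE : (∫⁻ s in I, ENNReal.ofReal (K s) ∂volume)
      = ENNReal.ofReal (rlKernel (2 - ν) t) := by
    have h := kernelInt_lintegral hν' ht
    rw [show (1 - ν) + 1 = 2 - ν by ring] at h
    exact h
  have hchain : ((‖∫ s in I, K s • ψ s ∂volume‖₊ : ℝ≥0∞)) ^ 2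
      ≤ ENNReal.ofReal (rlKernel (2 - ν) t) * B := by
    calc ((‖∫ s in I, K s • ψ s ∂volume‖₊ : ℝ≥0∞)) ^ 2
        ≤ (∫⁻ s in I, ENNReal.ofReal (K s) * (‖ψ s‖₊ : ℝ≥0∞) ∂volume) ^ 2 :=
          pow_le_pow_left₀ (zero_le ..) hnorm_le 2
      _ ≤ (∫⁻ s in I, ENNReal.ofReal (K s) ∂volume) * B := hCS
      _ = ENNReal.ofReal (rlKernel (2 - ν) t) * B := by rw [hkE]
  -- rewrite goal
  have hLHS : fracInt 1 φ t = ∫ s in I, K s • ψ s ∂volume := by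
    have e1 : fracInt 1 φ t = ∫ s in I, φ s ∂volume := by
      simp only [fracInt, rlKernel, sub_self, Real.rpow_zero, Real.Gamma_one, div_one, one_smul]
      rw [intervalIntegral.integral_of_le ht.le, MeasureTheory.integral_Ioc_eq_integral_Ioo]
    rw [e1, integral_congr_ae hφae, hsemigroup]
  have hfracν : ∀ s ∈ I, fracInt ν φ s = ψ s := by
    intro s hs
    simp only [fracInt]
    rw [intervalIntegral.integral_of_le hs.1.le, MeasureTheory.integral_Ioc_eq_integral_Ioo]
    refine integral_congr_ae ?_
    have hsub : Set.Ioo 0 s ⊆ I := fun x hx => ⟨hx.1, lt_trans hx.2 hs.2⟩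
    exact (ae_restrict_of_ae_restrict_of_subset hsub hφae).mono fun r hr => by simp only [hr]
  have hRHSfrac : fracInt (1 - ν) (fun s => ‖fracInt ν φ s‖ ^ 2) t = B.toReal := by
    rw [← hRHS_val]
    show (∫ s in (0:ℝ)..t, rlKernel (1 - ν) (t - s) • ‖fracInt ν φ s‖ ^ 2) = _
    rw [intervalIntegral.integral_of_le ht.le, MeasureTheory.integral_Ioc_eq_integral_Ioo]
    refine setIntegral_congr_fun measurableSet_Ioo fun s hs => ?_
    rw [smul_eq_mul, hfracν s hs]
  rw [hLHS, hRHSfrac]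
  have h1 : ‖∫ s in I, K s • ψ s ∂volume‖ ^ 2
      = (((‖∫ s in I, K s • ψ s ∂volume‖₊ : ℝ≥0∞)) ^ 2).toReal := by
    rw [ENNReal.toReal_pow, ENNReal.coe_toReal, coe_nnnorm]
  rw [h1]
  have h2 := ENNReal.toReal_mono (ENNReal.mul_ne_top ENNReal.ofReal_ne_top hBne) hchain
  refine le_trans h2 (le_of_eq ?_)
  rw [ENNReal.toReal_mul, ENNReal.toReal_ofReal (rlKernel_nonneg (by linarith) ht.le)]
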